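/- For every integer r ≥ 2 and every α with 0 < α ≤ 1/(2r), the sequence p_n^{r,1}, n = 0, 1, 2, …, is strictly increasing. -/

import Mathlib

open Finset Filter Topology

/-- `p α r d n = P(S_{n+r} ≥ S'_n + d)` for independent binomials with success
probability `α`, given by its explicit combinatorial formula. -/
noncomputable def competeProb (α : ℝ) (r d n : ℕ) : ℝ :=
  ∑ i ∈ Finset.range (n + 1), ∑ j ∈ Finset.Icc (i + d) (n + r),
    ((n + r).choose j : ℝ) * (n.choose i : ℝ) * α ^ (i + j) * (1 - α) ^ (2 * n + r - i - j)

namespace CompeteAux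
open Polynomial

open Polynomial

noncomputable def PA (α : ℝ) : Polynomial ℝ := Polynomial.C (1 - α) + Polynomial.C α * Polynomial.X
noncomputable def PB (α : ℝ) : Polynomial ℝ := Polynomial.C α + Polynomial.C (1 - α) * Polynomial.X
noncomputable def PG (α : ℝ) (n : ℕ) : Polynomial ℝ := PA α ^ n * PB α ^ n
noncomputable def PF (α : ℝ) (r n : ℕ) : Polynomial ℝ := PA α ^ (n + r) * PB α ^ n
noncomputable def Ez (q : Polynomial ℝ) (k : ℤ) : ℝ := if 0 ≤ k then q.coeff k.toNat else 0
noncomputable def EE (α : ℝ) (n : ℕ) (k : ℤ) : ℝ := Ez (PG α n) k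

lemma coeff_linpow {a : ℝ} (ha : a ≠ 0) (b : ℝ) (m k : ℕ) :
    ((C b + C a * X : Polynomial ℝ) ^ m).coeff k = (m.choose k : ℝ) * a ^ k * b ^ (m - k) := by
  have h1 : (C b + C a * X : Polynomial ℝ) = C a * (X + C (b / a)) := by
    rw [mul_add, ← C_mul, mul_div_cancel₀ _ ha, add_comm]
  rw [h1, mul_pow, ← C_pow, coeff_C_mul, coeff_X_add_C_pow]
  by_cases hk : k ≤ m
  · have h2 : a ^ m = a ^ k * a ^ (m - k) := by
      rw [← pow_add, Nat.add_sub_cancel' hk]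
    rw [h2, div_pow]
    field_simp
  · rw [Nat.choose_eq_zero_of_lt (by omega)]
    simp

lemma natDegree_PA (α : ℝ) : (PA α).natDegree ≤ 1 := by
  refine (natDegree_add_le _ _).trans (max_le ?_ ?_)
  · simp [natDegree_C]
  · exact (natDegree_C_mul_le _ _).trans natDegree_X_le

lemma natDegree_PB (α : ℝ) : (PB α).natDegree ≤ 1 := by
  refine (natDegree_add_le _ _).trans (max_le ?_ ?_)
  · simp [natDegree_C]
  · exact (natDegree_C_mul_le _ _).trans natDegree_X_le

lemma natDegree_PA_pow (α : ℝ) (m : ℕ) : (PA α ^ m).natDegree ≤ m :=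
  (natDegree_pow_le).trans (by nlinarith [natDegree_PA α])

lemma natDegree_PB_pow (α : ℝ) (m : ℕ) : (PB α ^ m).natDegree ≤ m :=
  (natDegree_pow_le).trans (by nlinarith [natDegree_PB α])

lemma natDegree_PG (α : ℝ) (n : ℕ) : (PG α n).natDegree ≤ 2 * n :=
  (natDegree_mul_le).trans (by have := natDegree_PA_pow α n; have := natDegree_PB_pow α n; omega)

lemma natDegree_PF (α : ℝ) (r n : ℕ) : (PF α r n).natDegree ≤ 2 * n + r :=
  (natDegree_mul_le).trans
    (by have := natDegree_PA_pow α (n + r); have := natDegree_PB_pow α n; omega)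

lemma Ez_ofNat (q : Polynomial ℝ) (m : ℕ) : Ez q (m : ℤ) = q.coeff m := by
  simp [Ez]

lemma Ez_neg (q : Polynomial ℝ) {k : ℤ} (hk : k < 0) : Ez q k = 0 := by
  simp [Ez, not_le.mpr hk]

/-- Convolution formula with flexible range. -/
lemma coeff_mul_ext (p q : Polynomial ℝ) (R k : ℕ) (hp : p.natDegree ≤ R) :
    (p * q).coeff k = ∑ j ∈ Finset.range (R + 1), p.coeff j * Ez q ((k : ℤ) - j) := by
  rw [coeff_mul, Finset.Nat.sum_antidiagonal_eq_sum_range_succ_mk]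
  have h1 : ∀ M, k ≤ M →
      (∑ j ∈ Finset.range (k + 1), p.coeff j * q.coeff (k - j))
        = ∑ j ∈ Finset.range (M + 1), p.coeff j * Ez q ((k : ℤ) - j) := by
    intro M hM
    have hc : (∑ j ∈ Finset.range (k + 1), p.coeff j * q.coeff (k - j))
        = ∑ j ∈ Finset.range (k + 1), p.coeff j * Ez q ((k : ℤ) - j) := by
      refine Finset.sum_congr rfl fun j hj => ?_
      simp only [Finset.mem_range] at hj
      have h2 : ((k : ℤ) - j) = ((k - j : ℕ) : ℤ) := by omega
      rw [h2, Ez_ofNat]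
    rw [hc]
    refine Finset.sum_subset (Finset.range_subset_range.2 (by omega)) ?_
    intro j hj hj2
    simp only [Finset.mem_range] at hj hj2
    rw [Ez_neg _ (by omega : (k:ℤ) - j < 0), mul_zero]
  have h2 : (∑ j ∈ Finset.range (R + 1), p.coeff j * Ez q ((k : ℤ) - j))
        = ∑ j ∈ Finset.range (max k R + 1), p.coeff j * Ez q ((k : ℤ) - j) := by
    refine Finset.sum_subset (Finset.range_subset_range.2 (by omega)) ?_
    intro j hj hj2
    simp only [Finset.mem_range] at hj hj2
    rw [coeff_eq_zero_of_natDegree_lt (by omega : p.natDegree < j), zero_mul]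
  rw [h1 (max k R) (by omega), h2]




lemma reflect_PB (α : ℝ) : reflect 1 (PB α) = PA α := by
  have h1 : PB α = C α * X ^ 0 + C (1 - α) * X ^ 1 := by
    simp [PB]
  rw [h1, reflect_add, reflect_C_mul_X_pow, reflect_C_mul_X_pow]
  simp [PA, revAt_le]
  ring

lemma reflect_PA (α : ℝ) : reflect 1 (PA α) = PB α := by
  have h1 : PA α = C (1 - α) * X ^ 0 + C α * X ^ 1 := by
    simp [PA]
  rw [h1, reflect_add, reflect_C_mul_X_pow, reflect_C_mul_X_pow]
  simp [PB, revAt_le]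
  ring

lemma reflect_PB_pow (α : ℝ) (m : ℕ) : reflect m (PB α ^ m) = PA α ^ m := by
  induction m with
  | zero => simp
  | succ m ih =>
    have : PB α ^ (m + 1) = PB α ^ m * PB α := pow_succ _ _
    rw [this, reflect_mul _ _ (natDegree_PB_pow α m) (natDegree_PB α), ih, reflect_PB, pow_succ]

lemma reflect_PA_pow (α : ℝ) (m : ℕ) : reflect m (PA α ^ m) = PB α ^ m := by
  induction m with
  | zero => simp
  | succ m ih =>
    rw [pow_succ, reflect_mul _ _ (natDegree_PA_pow α m) (natDegree_PA α), ih, reflect_PA, pow_succ]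

lemma reflect_one_sub_X : reflect 1 ((1 : Polynomial ℝ) - X) = X - 1 := by
  have h1 : (1 : Polynomial ℝ) - X = C 1 * X ^ 0 + C (-1) * X ^ 1 := by simp; ring
  rw [h1, reflect_add, reflect_C_mul_X_pow, reflect_C_mul_X_pow]
  simp [revAt_le]
  ring

lemma reflect_one_sub_X_pow (l : ℕ) : reflect l ((1 : Polynomial ℝ) - X ^ l) = X ^ l - 1 := by
  have h1 : (1 : Polynomial ℝ) - X ^ l = C 1 * X ^ 0 + C (-1) * X ^ l := by simp; ring
  rw [h1, reflect_add, reflect_C_mul_X_pow, reflect_C_mul_X_pow]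
  simp [revAt_le]
  ring




lemma reflect_PG (α : ℝ) (n : ℕ) : reflect (2 * n) (PG α n) = PG α n := by
  have h : (2 : ℕ) * n = n + n := by omega
  rw [PG, h, reflect_mul _ _ (natDegree_PA_pow α n) (natDegree_PB_pow α n),
      reflect_PA_pow, reflect_PB_pow, mul_comm]

lemma EE_symm' (α : ℝ) (n : ℕ) (k : ℤ) : EE α n k = EE α n (2 * n - k) := by
  have hdeg := natDegree_PG α n
  have hvanish : ∀ m : ℕ, 2 * n < m → (PG α n).coeff m = 0 := fun m hm =>
    coeff_eq_zero_of_natDegree_lt (by omega)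
  have hsymm : ∀ m : ℕ, m ≤ 2 * n → (PG α n).coeff m = (PG α n).coeff (2 * n - m) := by
    intro m hm
    conv_lhs => rw [← reflect_PG α n]
    rw [coeff_reflect, revAt_le hm]
  unfold EE Ez
  rcases lt_trichotomy k 0 with hk | hk | hk
  · rw [if_neg (by omega)]
    by_cases h2 : (0:ℤ) ≤ 2 * n - k
    · rw [if_pos h2, hvanish _ (by omega)]
    · rw [if_neg h2]
  · subst hk
    rw [if_pos le_rfl, if_pos (by omega : (0:ℤ) ≤ 2 * (n:ℤ) - 0)]
    have h0 : (Int.toNat 0) = 0 := rfl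
    rw [h0, hsymm 0 (by omega)]
    congr 1
  · by_cases h2 : k ≤ 2 * n
    · rw [if_pos (by omega), if_pos (by omega), hsymm k.toNat (by omega)]
      congr 1
      omega
    · rw [if_pos (by omega), hvanish k.toNat (by omega)]
      by_cases h3 : (0:ℤ) ≤ 2 * n - k
      · rw [if_pos h3, hvanish _ (by omega)]
      · rw [if_neg h3]

lemma EE_symm (α : ℝ) (n : ℕ) (t : ℤ) : EE α n ((n : ℤ) + t) = EE α n ((n : ℤ) - t) := by
  rw [EE_symm' α n ((n:ℤ) + t)]
  congr 1
  ring

lemma EE_coeff (α : ℝ) (n : ℕ) (k m : ℕ) (h : (m : ℤ) = k) : EE α n (m : ℤ) = (PG α n).coeff k := by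
  simp only [EE, Ez, if_pos (by omega : (0:ℤ) ≤ (m:ℤ))]
  congr 1
  omega

lemma coeff_PG_mul_Xpow (α : ℝ) (n k m : ℕ) :
    (PG α n * X ^ k).coeff m = EE α n ((m : ℤ) - k) := by
  rw [coeff_mul_X_pow']
  unfold EE Ez
  by_cases h : k ≤ m
  · rw [if_pos h, if_pos (by omega)]
    congr 1
    omega
  · rw [if_neg h, if_neg (by omega)]


noncomputable def DD (α : ℝ) (n : ℕ) (j : ℤ) : ℝ :=
  EE α n ((n : ℤ) + j - 1) - EE α n ((n : ℤ) + j)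
noncomputable def Ql (α : ℝ) (n l : ℕ) : ℝ :=
  (PG α n * ((1 - Polynomial.X) ^ 2 * (1 - Polynomial.X ^ l) ^ 2)).coeff (n + 1 + l)
noncomputable def Rl (α : ℝ) (n l : ℕ) : Polynomial ℝ := PB α ^ n * ((1 - Polynomial.X) * (1 - Polynomial.X ^ l))
noncomputable def R0 (α : ℝ) (n : ℕ) : Polynomial ℝ := PB α ^ n * (1 - Polynomial.X)
noncomputable def TL (α : ℝ) (r n d m : ℕ) : ℝ := ∑ k ∈ Finset.Icc d m, (PF α r n).coeff k




lemma CL (α : ℝ) (n l : ℕ) :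
    Ql α n l = 4 * EE α n (n : ℤ) - 4 * EE α n ((n : ℤ) + 1) - 4 * EE α n ((n : ℤ) + l)
      + 2 * EE α n ((n : ℤ) + l + 1) + 2 * EE α n ((n : ℤ) + l - 1) := by
  have hexp : PG α n * ((1 - X) ^ 2 * (1 - X ^ l) ^ 2)
      = PG α n * X ^ 0 - (PG α n * X ^ 1 + PG α n * X ^ 1) + PG α n * X ^ 2
        - (PG α n * X ^ l + PG α n * X ^ l)
        + (PG α n * X ^ (l + 1) + PG α n * X ^ (l + 1) + PG α n * X ^ (l + 1)
            + PG α n * X ^ (l + 1))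
        - (PG α n * X ^ (l + 2) + PG α n * X ^ (l + 2))
        + PG α n * X ^ (2 * l) - (PG α n * X ^ (2 * l + 1) + PG α n * X ^ (2 * l + 1))
        + PG α n * X ^ (2 * l + 2) := by
    ring
  rw [Ql, hexp]
  simp only [coeff_add, coeff_sub, coeff_PG_mul_Xpow]
  push_cast
  have h1 : EE α n ((n : ℤ) - 1) = EE α n ((n : ℤ) + 1) := (EE_symm α n 1).symm
  have h2 : EE α n ((n : ℤ) + 1 - l) = EE α n ((n : ℤ) + l - 1) := by
    have := EE_symm α n ((l : ℤ) - 1)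
    rw [show (n : ℤ) - ((l : ℤ) - 1) = (n : ℤ) + 1 - l by ring] at this
    rw [show (n : ℤ) + ((l : ℤ) - 1) = (n : ℤ) + l - 1 by ring] at this
    exact this.symm
  have h3 : EE α n ((n : ℤ) - l) = EE α n ((n : ℤ) + l) := (EE_symm α n l).symm
  have h4 : EE α n ((n : ℤ) - l - 1) = EE α n ((n : ℤ) + l + 1) := by
    have := EE_symm α n ((l : ℤ) + 1)
    rw [show (n : ℤ) - ((l : ℤ) + 1) = (n : ℤ) - l - 1 by ring] at this
    rw [show (n : ℤ) + ((l : ℤ) + 1) = (n : ℤ) + l + 1 by ring] at this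
    exact this.symm
  rw [show (n : ℤ) + 1 + l - 0 = (n : ℤ) + l + 1 by ring,
      show (n : ℤ) + 1 + l - 1 = (n : ℤ) + l by ring,
      show (n : ℤ) + 1 + l - 2 = (n : ℤ) + l - 1 by ring,
      show (n : ℤ) + 1 + l - l = (n : ℤ) + 1 by ring,
      show (n : ℤ) + 1 + l - (l + 1) = (n : ℤ) by ring,
      show (n : ℤ) + 1 + l - (l + 2) = (n : ℤ) - 1 by ring,
      show (n : ℤ) + 1 + l - 2 * l = (n : ℤ) + 1 - l by ring,
      show (n : ℤ) + 1 + l - (2 * l + 1) = (n : ℤ) - l by ring,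
      show (n : ℤ) + 1 + l - (2 * l + 2) = (n : ℤ) - l - 1 by ring,
      h1, h2, h3, h4]
  ring




lemma coeff_mul_reflect (Rp : Polynomial ℝ) (N : ℕ) :
    (Rp * reflect N Rp).coeff N = ∑ i ∈ Finset.range (N + 1), Rp.coeff i ^ 2 := by
  rw [coeff_mul, Finset.Nat.sum_antidiagonal_eq_sum_range_succ_mk]
  refine Finset.sum_congr rfl fun i hi => ?_
  simp only [Finset.mem_range] at hi
  rw [coeff_reflect, revAt_le (by omega : N - i ≤ N), show N - (N - i) = i by omega, sq]

lemma natDegree_one_sub_X_pow (l : ℕ) : ((1 : Polynomial ℝ) - X ^ l).natDegree ≤ l :=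
  (natDegree_sub_le _ _).trans (by simp [natDegree_X_pow])

lemma natDegree_one_sub_X : ((1 : Polynomial ℝ) - X).natDegree ≤ 1 := by
  have := natDegree_one_sub_X_pow 1
  simpa using this

lemma reflect_Rl (α : ℝ) (n l : ℕ) :
    reflect (n + (1 + l)) (Rl α n l) = PA α ^ n * ((1 - X) * (1 - X ^ l)) := by
  rw [Rl, reflect_mul _ _ (natDegree_PB_pow α n)
        ((natDegree_mul_le).trans (add_le_add natDegree_one_sub_X (natDegree_one_sub_X_pow l))),
      reflect_mul _ _ natDegree_one_sub_X (natDegree_one_sub_X_pow l),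
      reflect_PB_pow, reflect_one_sub_X, reflect_one_sub_X_pow]
  ring

lemma Ql_eq_sum_sq (α : ℝ) (n l : ℕ) :
    Ql α n l = ∑ i ∈ Finset.range (n + (1 + l) + 1), (Rl α n l).coeff i ^ 2 := by
  have hprod : Rl α n l * reflect (n + (1 + l)) (Rl α n l)
      = PG α n * ((1 - X) ^ 2 * (1 - X ^ l) ^ 2) := by
    rw [reflect_Rl, Rl, PG]; ring
  have h := coeff_mul_reflect (Rl α n l) (n + (1 + l))
  rw [hprod] at h
  rw [Ql, show n + 1 + l = n + (1 + l) by omega, h]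

lemma coeff_zero_Rl (α : ℝ) (n l : ℕ) (hl : 1 ≤ l) : (Rl α n l).coeff 0 = α ^ n := by
  rw [coeff_zero_eq_eval_zero]
  have hz : (0:ℝ) ^ l = 0 := zero_pow (by omega)
  simp [Rl, PB, hz]

lemma Ql_pos (α : ℝ) (n l : ℕ) (hl : 1 ≤ l) (hα0 : 0 < α) : 0 < Ql α n l := by
  have h := Ql_eq_sum_sq α n l
  have h2 : ((Rl α n l).coeff 0) ^ 2 ≤ ∑ i ∈ Finset.range (n + (1 + l) + 1), (Rl α n l).coeff i ^ 2 :=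
    Finset.single_le_sum (f := fun i => (Rl α n l).coeff i ^ 2) (a := 0)
      (fun i _ => sq_nonneg _) (Finset.mem_range.mpr (by omega))
  rw [coeff_zero_Rl α n l hl] at h2
  have h3 : (0:ℝ) < (α ^ n) ^ 2 := by positivity
  linarith

lemma reflect_R0 (α : ℝ) (n : ℕ) : reflect (n + 1) (R0 α n) = PA α ^ n * (X - 1) := by
  rw [R0, reflect_mul _ _ (natDegree_PB_pow α n) natDegree_one_sub_X,
      reflect_PB_pow, reflect_one_sub_X]

lemma DD1_eq (α : ℝ) (n : ℕ) :
    2 * DD α n 1 = ∑ i ∈ Finset.range (n + 1 + 1), (R0 α n).coeff i ^ 2 := by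
  have hprod : R0 α n * reflect (n + 1) (R0 α n) = -(PG α n * ((1 - X) * (1 - X))) := by
    rw [reflect_R0, R0, PG]; ring
  have h := coeff_mul_reflect (R0 α n) (n + 1)
  rw [hprod] at h
  have hexp : PG α n * ((1 - X) * (1 - X))
      = PG α n * X ^ 0 - (PG α n * X ^ 1 + PG α n * X ^ 1) + PG α n * X ^ 2 := by ring
  rw [hexp] at h
  simp only [coeff_neg, coeff_add, coeff_sub, coeff_PG_mul_Xpow] at h
  push_cast at h
  rw [show (n : ℤ) + 1 - 0 = (n : ℤ) + 1 by ring, show (n : ℤ) + 1 - 1 = (n : ℤ) by ring,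
      show (n : ℤ) + 1 - 2 = (n : ℤ) - 1 by ring,
      (EE_symm α n 1).symm] at h
  rw [DD, show (n : ℤ) + 1 - 1 = (n : ℤ) by ring]
  linarith [h]

lemma coeff_zero_R0 (α : ℝ) (n : ℕ) : (R0 α n).coeff 0 = α ^ n := by
  rw [coeff_zero_eq_eval_zero]
  simp [R0, PB]

lemma DD1_pos (α : ℝ) (n : ℕ) (hα0 : 0 < α) : 0 < DD α n 1 := by
  have h := DD1_eq α n
  have h2 : ((R0 α n).coeff 0) ^ 2 ≤ ∑ i ∈ Finset.range (n + 1 + 1), (R0 α n).coeff i ^ 2 :=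
    Finset.single_le_sum (f := fun i => (R0 α n).coeff i ^ 2) (a := 0)
      (fun i _ => sq_nonneg _) (Finset.mem_range.mpr (by omega))
  rw [coeff_zero_R0] at h2
  have h3 : (0:ℝ) < (α ^ n) ^ 2 := by positivity
  linarith

lemma claim (α : ℝ) (n : ℕ) (m : ℕ) :
    (2 * ((m : ℝ) + 1) - 1) * DD α n 1 - DD α n ((m : ℤ) + 1)
      = (1 / 2) * ∑ l ∈ Finset.Icc 1 m, Ql α n l := by
  induction m with
  | zero =>
    rw [show ((0:ℕ):ℤ) + 1 = 1 by norm_num, Finset.Icc_eq_empty (by omega)]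
    norm_num
  | succ m ih =>
    rw [Finset.sum_Icc_succ_top (by omega : 1 ≤ m + 1)]
    have hCL := CL α n (m + 1)
    push_cast at hCL ⊢
    rw [show (n : ℤ) + ((m : ℤ) + 1) + 1 = (n : ℤ) + ((m : ℤ) + 1 + 1) by ring,
        show (n : ℤ) + ((m : ℤ) + 1) - 1 = (n : ℤ) + (m : ℤ) by ring] at hCL
    simp only [DD] at ih ⊢
    rw [show (n : ℤ) + ((m : ℤ) + 1 + 1) - 1 = (n : ℤ) + ((m : ℤ) + 1) by ring]
    rw [show (n : ℤ) + ((m : ℤ) + 1) - 1 = (n : ℤ) + (m : ℤ) by ring] at ih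
    rw [show (n : ℤ) + 1 - 1 = (n : ℤ) by ring] at ih ⊢
    linarith [hCL, ih]

lemma DD_lt (α : ℝ) (n j : ℕ) (hj : 2 ≤ j) (hα0 : 0 < α) :
    DD α n (j : ℤ) < (2 * (j : ℝ) - 1) * DD α n 1 := by
  have h := claim α n (j - 1)
  have hcast : ((j - 1 : ℕ) : ℝ) = (j : ℝ) - 1 := by
    push_cast [Nat.cast_sub (by omega : 1 ≤ j)]; ring
  have hcast2 : ((j - 1 : ℕ) : ℤ) + 1 = (j : ℤ) := by omega
  rw [hcast, hcast2] at h
  have hpos : 0 < ∑ l ∈ Finset.Icc 1 (j - 1), Ql α n l := by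
    refine Finset.sum_pos (fun l hl => Ql_pos α n l ?_ hα0) ?_
    · simp only [Finset.mem_Icc] at hl; omega
    · exact ⟨1, by simp only [Finset.mem_Icc]; omega⟩
  nlinarith [h]




lemma binom_sum_one (α : ℝ) (m : ℕ) :
    ∑ j ∈ Finset.range (m + 1), (m.choose j : ℝ) * α ^ j * (1 - α) ^ (m - j) = 1 := by
  have h := add_pow α (1 - α) m
  rw [show α + (1 - α) = 1 by ring, one_pow] at h
  calc ∑ j ∈ Finset.range (m + 1), (m.choose j : ℝ) * α ^ j * (1 - α) ^ (m - j)
      = ∑ j ∈ Finset.range (m + 1), α ^ j * (1 - α) ^ (m - j) * (m.choose j : ℝ) :=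
        Finset.sum_congr rfl fun j _ => by ring
    _ = 1 := h.symm

lemma binom_sum_id (α : ℝ) (m : ℕ) :
    ∑ j ∈ Finset.range (m + 1), (j : ℝ) * ((m.choose j : ℝ) * α ^ j * (1 - α) ^ (m - j))
      = m * α := by
  rcases Nat.eq_zero_or_pos m with hm | hm
  · subst hm; simp
  obtain ⟨m', rfl⟩ : ∃ m', m = m' + 1 := ⟨m - 1, by omega⟩
  rw [Finset.sum_range_succ']
  simp only [Nat.cast_zero, zero_mul, add_zero]
  have hstep : ∀ i ∈ Finset.range (m' + 1),
      (((i + 1 : ℕ)) : ℝ) * (((m' + 1).choose (i + 1) : ℝ) * α ^ (i + 1) * (1 - α) ^ (m' + 1 - (i + 1)))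
        = ((m' : ℝ) + 1) * α * ((m'.choose i : ℝ) * α ^ i * (1 - α) ^ (m' - i)) := by
    intro i hi
    have hc : (i + 1) * ((m' + 1).choose (i + 1)) = (m' + 1) * (m'.choose i) := by
      rw [mul_comm (i + 1), Nat.add_one_mul_choose_eq m' i]
    have hc' : ((i : ℝ) + 1) * (((m' + 1).choose (i + 1) : ℝ)) = ((m' : ℝ) + 1) * (m'.choose i) := by
      exact_mod_cast congrArg (fun x : ℕ => (x : ℝ)) hc
    have hsub : m' + 1 - (i + 1) = m' - i := by omega
    rw [hsub, pow_succ]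
    push_cast
    linear_combination (α ^ i * α * (1 - α) ^ (m' - i)) * hc'
  rw [Finset.sum_congr rfl hstep, ← Finset.mul_sum, binom_sum_one]
  push_cast
  ring

lemma coeff_PA_pow (α : ℝ) (hα0 : α ≠ 0) (m k : ℕ) :
    (PA α ^ m).coeff k = (m.choose k : ℝ) * α ^ k * (1 - α) ^ (m - k) :=
  coeff_linpow hα0 (1 - α) m k

lemma PF_eq (α : ℝ) (r n : ℕ) : PF α r n = PA α ^ r * PG α n := by
  rw [PF, PG, pow_add]
  ring

lemma PF_coeff (α : ℝ) (r n k : ℕ) :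
    (PF α r n).coeff k = ∑ j ∈ Finset.range (r + 1), (PA α ^ r).coeff j * EE α n ((k : ℤ) - j) := by
  rw [PF_eq, coeff_mul_ext _ _ r k (natDegree_PA_pow α r)]
  rfl

lemma range_split (r : ℕ) (hr : 2 ≤ r) :
    Finset.range (r + 1) = insert 0 (insert 1 (Finset.Icc 2 r)) := by
  ext x
  simp only [Finset.mem_range, Finset.mem_insert, Finset.mem_Icc]
  omega

theorem main_pos (α : ℝ) (r n : ℕ) (hr : 2 ≤ r) (hα0 : 0 < α) (hα : α ≤ 1 / (2 * r)) :
    0 < (PF α r n).coeff n - (PF α r n).coeff (n + 1) := by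
  have hr0 : (0:ℝ) < 2 * r := by positivity
  have hα1 : α < 1 := by
    have h4 : (4:ℝ) ≤ 2 * r := by
      have : (2:ℝ) ≤ (r:ℝ) := by exact_mod_cast hr
      linarith
    have : 1 / (2 * (r:ℝ)) ≤ 1 / 4 := by
      apply one_div_le_one_div_of_le <;> linarith
    linarith
  have h1α : (0:ℝ) < 1 - α := by linarith
  set u : ℕ → ℝ := fun j => (PA α ^ r).coeff j with hu
  have hu_pos : ∀ j ≤ r, 0 < u j := by
    intro j hj
    rw [hu]
    simp only
    rw [coeff_PA_pow α (ne_of_gt hα0)]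
    have : 0 < (r.choose j : ℝ) := by
      exact_mod_cast Nat.choose_pos hj
    positivity
  -- difference as sum over j of -u j * DD j
  have hdiff : (PF α r n).coeff n - (PF α r n).coeff (n + 1)
      = ∑ j ∈ Finset.range (r + 1), u j * (-DD α n (j : ℤ)) := by
    rw [PF_coeff, PF_coeff]
    rw [← Finset.sum_sub_distrib]
    refine Finset.sum_congr rfl fun j _ => ?_
    have e1 : EE α n ((n : ℤ) - j) = EE α n ((n : ℤ) + j) := (EE_symm α n j).symm
    have e2 : EE α n (((n + 1 : ℕ) : ℤ) - j) = EE α n ((n : ℤ) + j - 1) := by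
      have h := EE_symm α n ((j : ℤ) - 1)
      rw [show (n : ℤ) - ((j:ℤ) - 1) = (n : ℤ) + 1 - j by ring,
          show (n : ℤ) + ((j:ℤ) - 1) = (n : ℤ) + j - 1 by ring] at h
      rw [show ((n + 1 : ℕ) : ℤ) - j = (n : ℤ) + 1 - j by push_cast; ring, ← h]
    rw [e2]
    show u j * EE α n ((n:ℤ) - j) - u j * EE α n ((n:ℤ) + j - 1) = _
    rw [e1, DD]
    ring
  rw [hdiff, range_split r hr, Finset.sum_insert (by simp), Finset.sum_insert (by simp)]
  have hDD0 : DD α n 0 = -DD α n 1 := by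
    rw [DD, DD]
    have h := EE_symm α n 1
    rw [show (n:ℤ) + 0 - 1 = (n:ℤ) - 1 by ring, show (n:ℤ) + 0 = (n:ℤ) by ring,
        show (n:ℤ) + 1 - 1 = (n:ℤ) by ring, ← h]
    ring
  -- bound the tail sum
  have htail : ∑ j ∈ Finset.Icc 2 r, u j * (-DD α n (j:ℤ))
      > ∑ j ∈ Finset.Icc 2 r, u j * (-((2 * (j:ℝ) - 1) * DD α n 1)) := by
    refine Finset.sum_lt_sum_of_nonempty ⟨2, by simp [Finset.mem_Icc]; omega⟩ ?_
    intro j hj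
    simp only [Finset.mem_Icc] at hj
    have := DD_lt α n j hj.1 hα0
    have hup := hu_pos j hj.2
    nlinarith
  have hsum_u : ∑ j ∈ Finset.range (r + 1), u j = 1 := by
    rw [hu]
    simp only
    calc ∑ j ∈ Finset.range (r+1), (PA α ^ r).coeff j
        = ∑ j ∈ Finset.range (r+1), (r.choose j : ℝ) * α ^ j * (1-α) ^ (r - j) :=
          Finset.sum_congr rfl fun j _ => coeff_PA_pow α (ne_of_gt hα0) r j
      _ = 1 := binom_sum_one α r
  have hsum_ju : ∑ j ∈ Finset.range (r + 1), (j:ℝ) * u j = r * α := by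
    rw [hu]
    simp only
    calc ∑ j ∈ Finset.range (r+1), (j:ℝ) * (PA α ^ r).coeff j
        = ∑ j ∈ Finset.range (r+1), (j:ℝ) * ((r.choose j : ℝ) * α ^ j * (1-α) ^ (r - j)) :=
          Finset.sum_congr rfl fun j _ => by rw [coeff_PA_pow α (ne_of_gt hα0)]
      _ = r * α := binom_sum_id α r
  have hS : ∑ j ∈ Finset.Icc 2 r, (2 * (j:ℝ) - 1) * u j = 2 * r * α - 1 + u 0 - u 1 := by
    have h2 : ∑ j ∈ Finset.range (r+1), (2 * (j:ℝ) - 1) * u j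
        = (2 * (0:ℝ) - 1) * u 0 + ((2 * (1:ℝ) - 1) * u 1 + ∑ j ∈ Finset.Icc 2 r, (2 * (j:ℝ) - 1) * u j) := by
      rw [range_split r hr, Finset.sum_insert (by simp), Finset.sum_insert (by simp)]
      norm_num
    have h3 : ∑ j ∈ Finset.range (r+1), (2 * (j:ℝ) - 1) * u j
        = 2 * (∑ j ∈ Finset.range (r+1), (j:ℝ) * u j) - ∑ j ∈ Finset.range (r+1), u j := by
      rw [Finset.mul_sum, ← Finset.sum_sub_distrib]
      exact Finset.sum_congr rfl fun j _ => by ring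
    rw [h3, hsum_u, hsum_ju] at h2
    linarith
  have h2rα : 2 * (r:ℝ) * α ≤ 1 := by
    have := (le_div_iff₀ hr0).1 hα
    linarith
  have hDD1 := DD1_pos α n hα0
  have hsum_eq : ∑ j ∈ Finset.Icc 2 r, u j * (-((2 * (j:ℝ) - 1) * DD α n 1))
      = -((2 * (r:ℝ) * α - 1 + u 0 - u 1) * DD α n 1) := by
    have h1 : ∀ j ∈ Finset.Icc 2 r, u j * (-((2 * (j:ℝ) - 1) * DD α n 1))
        = ((2 * (j:ℝ) - 1) * u j) * (-DD α n 1) := fun j _ => by ring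
    rw [Finset.sum_congr rfl h1, ← Finset.sum_mul, hS]
    ring
  have htail' := htail
  rw [hsum_eq] at htail'
  have hnn : (0:ℝ) ≤ (1 - 2 * (r:ℝ) * α) * DD α n 1 :=
    mul_nonneg (by linarith) hDD1.le
  push_cast
  rw [hDD0]
  linarith [htail', hnn]







lemma term_match {α : ℝ} (r n i j : ℕ) (hi : i ≤ n) (hj : j ≤ n + r) (hα0 : α ≠ 0) (hα1 : (1:ℝ) - α ≠ 0) :
    ((n + r).choose j : ℝ) * (n.choose i : ℝ) * α ^ (i + j) * (1 - α) ^ (2 * n + r - i - j)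
      = (PA α ^ (n + r)).coeff j * (PB α ^ n).coeff (n - i) := by
  rw [PA, PB, coeff_linpow hα0 (1 - α) (n + r) j, coeff_linpow hα1 α n (n - i)]
  rw [Nat.choose_symm hi, show n - (n - i) = i by omega]
  rw [show 2 * n + r - i - j = (n + r - j) + (n - i) by omega]
  rw [pow_add α i j, pow_add (1 - α) (n + r - j) (n - i)]
  ring

lemma competeProb_eq_tail {α : ℝ} (r n : ℕ) (hα0 : α ≠ 0) (hα1 : (1:ℝ) - α ≠ 0) :
    competeProb α r 1 n = TL α r n (n + 1) (2 * n + r) := by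
  set cA : ℕ → ℝ := fun j => (PA α ^ (n + r)).coeff j with hcA
  set cB : ℕ → ℝ := fun m => (PB α ^ n).coeff m with hcB
  have hcB0 : ∀ m, n < m → cB m = 0 := fun m hm =>
    coeff_eq_zero_of_natDegree_lt (lt_of_le_of_lt (natDegree_PB_pow α n) hm)
  -- step 1 : rewrite competeProb termwise
  have step1 : competeProb α r 1 n
      = ∑ i ∈ Finset.range (n + 1), ∑ j ∈ Finset.Icc (i + 1) (n + r), cA j * cB (n - i) := by
    refine Finset.sum_congr rfl fun i hi => Finset.sum_congr rfl fun j hj => ?_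
    simp only [Finset.mem_range] at hi
    simp only [Finset.mem_Icc] at hj
    exact term_match r n i j (by omega) hj.2 hα0 hα1
  -- step 2 : reflect the outer index
  have step2 : ∑ i ∈ Finset.range (n + 1), ∑ j ∈ Finset.Icc (i + 1) (n + r), cA j * cB (n - i)
      = ∑ m ∈ Finset.range (n + 1), ∑ j ∈ Finset.Icc (n - m + 1) (n + r), cA j * cB (n - (n - m)) := by
    rw [← Finset.sum_range_reflect]
    refine Finset.sum_congr rfl fun m hm => ?_
    simp only [Nat.add_sub_cancel]
  -- step 3 : termwise simplify and guard form
  have step3 : ∀ m ∈ Finset.range (n + 1),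
      ∑ j ∈ Finset.Icc (n - m + 1) (n + r), cA j * cB (n - (n - m))
        = ∑ j ∈ Finset.range (n + r + 1), if n + 1 ≤ j + m then cA j * cB m else 0 := by
    intro m hm
    simp only [Finset.mem_range] at hm
    have h1 : n - (n - m) = m := by omega
    have h2 : Finset.Icc (n - m + 1) (n + r)
        = Finset.filter (fun j => n + 1 ≤ j + m) (Finset.range (n + r + 1)) := by
      ext j
      simp only [Finset.mem_Icc, Finset.mem_filter, Finset.mem_range]
      omega
    rw [h1, h2, Finset.sum_filter]
  -- RHS expansion
  have hRHS : TL α r n (n + 1) (2 * n + r)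
      = ∑ k ∈ Finset.Icc (n + 1) (2 * n + r), ∑ j ∈ Finset.range (n + r + 1),
          cA j * Ez (PB α ^ n) ((k : ℤ) - j) := by
    refine Finset.sum_congr rfl fun k hk => ?_
    rw [PF, coeff_mul_ext _ _ (n + r) k (natDegree_PA_pow α (n + r))]
  rw [step1, step2, Finset.sum_congr rfl step3, hRHS, Finset.sum_comm, Finset.sum_comm (s := Finset.Icc (n+1) (2*n+r))]
  refine Finset.sum_congr rfl fun j hj => ?_
  simp only [Finset.mem_range] at hj
  -- inner sums equal, fixed j ≤ n + r
  have hL : ∑ m ∈ Finset.range (n + 1), (if n + 1 ≤ j + m then cA j * cB m else 0)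
      = ∑ m ∈ Finset.Icc (n + 1 - j) n, cA j * cB m := by
    rw [← Finset.sum_filter]
    refine Finset.sum_congr ?_ fun m _ => rfl
    ext m
    simp only [Finset.mem_filter, Finset.mem_range, Finset.mem_Icc]
    omega
  have hR : ∑ k ∈ Finset.Icc (n + 1) (2 * n + r), cA j * Ez (PB α ^ n) ((k : ℤ) - j)
      = ∑ m ∈ Finset.Icc (n + 1 - j) (2 * n + r - j), cA j * cB m := by
    rw [← Finset.sum_filter_add_sum_filter_not (Finset.Icc (n+1) (2*n+r)) (fun k => j ≤ k)]
    have hzero : ∑ k ∈ Finset.filter (fun k => ¬ j ≤ k) (Finset.Icc (n+1) (2*n+r)),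
        cA j * Ez (PB α ^ n) ((k : ℤ) - j) = 0 := by
      refine Finset.sum_eq_zero fun k hk => ?_
      simp only [Finset.mem_filter] at hk
      rw [Ez_neg _ (by omega : (k:ℤ) - j < 0), mul_zero]
    rw [hzero, add_zero]
    have hmap : Finset.filter (fun k => j ≤ k) (Finset.Icc (n+1) (2*n+r))
        = Finset.map (addRightEmbedding j) (Finset.Icc (n + 1 - j) (2 * n + r - j)) := by
      rw [Finset.map_add_right_Icc]
      ext k
      simp only [Finset.mem_filter, Finset.mem_Icc]
      omega
    rw [hmap, Finset.sum_map]
    refine Finset.sum_congr rfl fun m hm => ?_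
    simp only [addRightEmbedding_apply]
    rw [show ((m + j : ℕ) : ℤ) - j = ((m : ℕ) : ℤ) by push_cast; ring, Ez_ofNat]
  rw [hL, hR]
  have hnle : n ≤ 2 * n + r - j := by omega
  refine Finset.sum_subset (Finset.Icc_subset_Icc_right hnle) ?_
  intro m hm hm2
  simp only [Finset.mem_Icc] at hm hm2
  rw [hcB0 m (by omega), mul_zero]




lemma PF_succ (α : ℝ) (r n : ℕ) : PF α r (n + 1) = (PA α * PB α) * PF α r n := by
  rw [PF, PF, show n + 1 + r = (n + r) + 1 by omega, pow_succ, pow_succ]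
  ring

lemma g_coeffs (α : ℝ) :
    (PA α * PB α).coeff 0 = (1 - α) * α ∧ (PA α * PB α).coeff 1 = (1 - α) ^ 2 + α ^ 2
      ∧ (PA α * PB α).coeff 2 = α * (1 - α) := by
  refine ⟨?_, ?_, ?_⟩ <;>
    simp [PA, PB, coeff_mul, Finset.Nat.sum_antidiagonal_eq_sum_range_succ_mk,
      Finset.sum_range_succ, coeff_C, coeff_one, coeff_X] <;> ring

lemma natDegree_g (α : ℝ) : (PA α * PB α).natDegree ≤ 2 :=
  natDegree_mul_le.trans (by have := natDegree_PA α; have := natDegree_PB α; omega)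

lemma hrec (α : ℝ) (r n : ℕ) : ∀ k, 2 ≤ k → (PF α r (n + 1)).coeff k
    = (1 - α) * α * (PF α r n).coeff k + ((1 - α) ^ 2 + α ^ 2) * (PF α r n).coeff (k - 1)
      + α * (1 - α) * (PF α r n).coeff (k - 2) := by
  intro k hk
  obtain ⟨hg0, hg1, hg2⟩ := g_coeffs α
  rw [PF_succ, coeff_mul_ext _ _ 2 k (natDegree_g α)]
  rw [Finset.sum_range_succ, Finset.sum_range_succ, Finset.sum_range_succ, Finset.sum_range_zero]
  rw [hg0, hg1, hg2]
  rw [show (k : ℤ) - (0:ℕ) = ((k : ℕ) : ℤ) by push_cast; ring,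
      show (k : ℤ) - (1:ℕ) = ((k - 1 : ℕ) : ℤ) by omega,
      show (k : ℤ) - (2:ℕ) = ((k - 2 : ℕ) : ℤ) by omega,
      Ez_ofNat, Ez_ofNat, Ez_ofNat]
  ring

theorem final (r : ℕ) (hr : 2 ≤ r) (α : ℝ) (hα0 : 0 < α) (hα : α ≤ 1 / (2 * r)) :
    ∀ n : ℕ, competeProb α r 1 n < competeProb α r 1 (n + 1) := by
  intro n
  have hr0 : (0:ℝ) < 2 * r := by positivity
  have hα1 : α < 1 := by
    have h4 : (4:ℝ) ≤ 2 * r := by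
      have : (2:ℝ) ≤ (r:ℝ) := by exact_mod_cast hr
      linarith
    have : 1 / (2 * (r:ℝ)) ≤ 1 / 4 := by
      apply one_div_le_one_div_of_le <;> linarith
    linarith
  have hαne : α ≠ 0 := ne_of_gt hα0
  have h1αne : (1:ℝ) - α ≠ 0 := by linarith
  set M := 2 * n + r + 2 with hM
  have hvanish : ∀ k, 2 * n + r < k → (PF α r n).coeff k = 0 := fun k hk =>
    coeff_eq_zero_of_natDegree_lt (lt_of_le_of_lt (natDegree_PF α r n) hk)
  -- p_n
  have hpn : competeProb α r 1 n = ∑ k ∈ Finset.Icc (n + 1) M, (PF α r n).coeff k := by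
    rw [competeProb_eq_tail r n hαne h1αne, TL]
    refine Finset.sum_subset (Finset.Icc_subset_Icc_right (by omega)) ?_
    intro k hk hk2
    simp only [Finset.mem_Icc] at hk hk2
    exact hvanish k (by omega)
  -- p_{n+1}
  have hpn1 : competeProb α r 1 (n + 1) = ∑ k ∈ Finset.Icc (n + 2) M, (PF α r (n + 1)).coeff k := by
    rw [competeProb_eq_tail r (n + 1) hαne h1αne, TL, show 2 * (n + 1) + r = M by omega,
        show n + 1 + 1 = n + 2 by omega]
  -- split the recurrence over the sum
  have hsplit : ∑ k ∈ Finset.Icc (n + 2) M, (PF α r (n + 1)).coeff k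
      = (1 - α) * α * ∑ k ∈ Finset.Icc (n + 2) M, (PF α r n).coeff k
        + ((1 - α) ^ 2 + α ^ 2) * ∑ k ∈ Finset.Icc (n + 2) M, (PF α r n).coeff (k - 1)
        + α * (1 - α) * ∑ k ∈ Finset.Icc (n + 2) M, (PF α r n).coeff (k - 2) := by
    rw [Finset.mul_sum, Finset.mul_sum, Finset.mul_sum, ← Finset.sum_add_distrib,
        ← Finset.sum_add_distrib]
    refine Finset.sum_congr rfl fun k hk => ?_
    simp only [Finset.mem_Icc] at hk
    exact hrec α r n k (by omega)
  -- shifts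
  have hshift1 : ∑ k ∈ Finset.Icc (n + 2) M, (PF α r n).coeff (k - 1)
      = ∑ k ∈ Finset.Icc (n + 1) M, (PF α r n).coeff k := by
    have h1 : Finset.Icc (n + 2) M = Finset.map (addRightEmbedding 1) (Finset.Icc (n + 1) (M - 1)) := by
      rw [Finset.map_add_right_Icc]
      congr 1 <;> omega
    rw [h1, Finset.sum_map]
    have h2 : ∀ m ∈ Finset.Icc (n + 1) (M - 1), (PF α r n).coeff (addRightEmbedding 1 m - 1)
        = (PF α r n).coeff m := by
      intro m hm
      simp only [addRightEmbedding_apply]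
      congr 1
    rw [Finset.sum_congr rfl h2]
    refine Finset.sum_subset (Finset.Icc_subset_Icc_right (by omega)) ?_
    intro k hk hk2
    simp only [Finset.mem_Icc] at hk hk2
    exact hvanish k (by omega)
  have hshift2 : ∑ k ∈ Finset.Icc (n + 2) M, (PF α r n).coeff (k - 2)
      = ∑ k ∈ Finset.Icc n M, (PF α r n).coeff k := by
    have h1 : Finset.Icc (n + 2) M = Finset.map (addRightEmbedding 2) (Finset.Icc n (M - 2)) := by
      rw [Finset.map_add_right_Icc]
      congr 1 <;> omega
    rw [h1, Finset.sum_map]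
    have h2 : ∀ m ∈ Finset.Icc n (M - 2), (PF α r n).coeff (addRightEmbedding 2 m - 2)
        = (PF α r n).coeff m := by
      intro m hm
      simp only [addRightEmbedding_apply]
      congr 1
    rw [Finset.sum_congr rfl h2]
    refine Finset.sum_subset (Finset.Icc_subset_Icc_right (by omega)) ?_
    intro k hk hk2
    simp only [Finset.mem_Icc] at hk hk2
    exact hvanish k (by omega)
  -- peels
  have hpeel0 : ∑ k ∈ Finset.Icc n M, (PF α r n).coeff k
      = (PF α r n).coeff n + ∑ k ∈ Finset.Icc (n + 1) M, (PF α r n).coeff k := by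
    have h1 : Finset.Icc n M = insert n (Finset.Icc (n + 1) M) := by
      ext x
      simp only [Finset.mem_Icc, Finset.mem_insert]
      omega
    rw [h1, Finset.sum_insert (by simp only [Finset.mem_Icc]; omega)]
  have hpeel1 : ∑ k ∈ Finset.Icc (n + 1) M, (PF α r n).coeff k
      = (PF α r n).coeff (n + 1) + ∑ k ∈ Finset.Icc (n + 2) M, (PF α r n).coeff k := by
    have h1 : Finset.Icc (n + 1) M = insert (n + 1) (Finset.Icc (n + 2) M) := by
      ext x
      simp only [Finset.mem_Icc, Finset.mem_insert]
      omega
    rw [h1, Finset.sum_insert (by simp only [Finset.mem_Icc]; omega)]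
  have hmain := main_pos α r n hr hα0 hα
  have hqpos : (0:ℝ) < α * (1 - α) := by nlinarith
  have hkey : competeProb α r 1 (n + 1) - competeProb α r 1 n
      = α * (1 - α) * ((PF α r n).coeff n - (PF α r n).coeff (n + 1)) := by
    rw [hpn, hpn1, hsplit, hshift1, hshift2, hpeel0, hpeel1]
    ring
  nlinarith [hkey, hqpos, hmain]


end CompeteAux

theorem competeProb_increasing_of_le_inv_two_r (r : ℕ) (hr : 2 ≤ r) (α : ℝ)
    (hα0 : 0 < α) (hα : α ≤ 1 / (2 * r)) :
    ∀ n : ℕ, competeProb α r 1 n < competeProb α r 1 (n + 1) :=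
  CompeteAux.final r hr α hα0 hα
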